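/- Let (g, μ) be a nilpotent Lie algebra, h ⊆ g a subalgebra of codimension 2, and a₁, a₂ such that g = ⟨a₁,a₂⟩ ⊕ h. Then a₁*∘ad_{a₁}(h) + a₂*∘ad_{a₂}(h) = 0 for all h ∈ h; consequently, for any y in Z_g(h), μ_t = μ + t(a₁* ∧ a₂* ⊗ y) is a Lie bracket for all t. -/

import Mathlib

/-- (a₁* ∧ a₂* ⊗ y)(u,v). -/
def wedgeTensor {K V : Type*} [Field K] [AddCommGroup V] [Module K V]
    (c₁ c₂ : V →ₗ[K] K) (y : V) (u v : V) : V :=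
  (c₁ u * c₂ v - c₂ u * c₁ v) • y

/-- Left-normed iterated bracket: μ(…μ(μ(x,l₁),l₂)…,l_k). -/
def leftBracket {K V : Type*} [Field K] [AddCommGroup V] [Module K V]
    (μ : V →ₗ[K] V →ₗ[K] V) (x : V) (l : List V) : V :=
  l.foldl (fun a b => μ a b) x

set_option maxHeartbeats 1000000 in
/-- For a nilpotent Lie algebra and a codimension-2 subalgebra h with
g = ⟨a₁,a₂⟩ ⊕ h, one has a₁*∘ad_{a₁} + a₂*∘ad_{a₂} = 0 on h; consequently for any
y ∈ Z_g(h), μ_t = μ + t(a₁* ∧ a₂* ⊗ y) is a Lie bracket for all t. -/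
theorem nilpotent_main_deformation (K V : Type*) [Field K] [CharZero K]
    [AddCommGroup V] [Module K V] [FiniteDimensional K V]
    (μ : V →ₗ[K] V →ₗ[K] V)
    (hμa : ∀ u v : V, μ u v = - μ v u)
    (hμj : ∀ u v w : V, μ (μ u v) w + μ (μ v w) u + μ (μ w u) v = 0)
    (hnil : ∃ k : ℕ, ∀ (x : V) (l : List V), l.length = k → leftBracket μ x l = 0)
    (h : Submodule K V) (hsub : ∀ u ∈ h, ∀ v ∈ h, μ u v ∈ h)
    (a₁ a₂ : V) (c₁ c₂ : V →ₗ[K] K)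
    (h11 : c₁ a₁ = 1) (h12 : c₁ a₂ = 0) (h21 : c₂ a₁ = 0) (h22 : c₂ a₂ = 1)
    (hc₁h : ∀ w ∈ h, c₁ w = 0) (hc₂h : ∀ w ∈ h, c₂ w = 0)
    (hdec : ∀ v : V, v - c₁ v • a₁ - c₂ v • a₂ ∈ h) :
    (∀ w ∈ h, c₁ (μ a₁ w) + c₂ (μ a₂ w) = 0) ∧
    (∀ y : V, (∀ w ∈ h, μ y w = 0) → ∀ t : K,
      (∀ u v : V,
        μ u v + t • wedgeTensor c₁ c₂ y u v = -(μ v u + t • wedgeTensor c₁ c₂ y v u)) ∧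
      (∀ u v w : V,
        (μ (μ u v + t • wedgeTensor c₁ c₂ y u v) w
          + t • wedgeTensor c₁ c₂ y (μ u v + t • wedgeTensor c₁ c₂ y u v) w) +
        (μ (μ v w + t • wedgeTensor c₁ c₂ y v w) u
          + t • wedgeTensor c₁ c₂ y (μ v w + t • wedgeTensor c₁ c₂ y v w) u) +
        (μ (μ w u + t • wedgeTensor c₁ c₂ y w u) v
          + t • wedgeTensor c₁ c₂ y (μ w u + t • wedgeTensor c₁ c₂ y w u) v) = 0)) := by
  obtain ⟨k, hk⟩ := hnil
  have sq0 : ∀ x : V, μ x x = 0 := by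
    intro x
    have h2 := hμa x x
    have h3 : (2 : K) • μ x x = 0 := by
      rw [two_smul]; nth_rewrite 2 [h2]; simp
    rcases smul_eq_zero.1 h3 with h4 | h4
    · exact absurd h4 two_ne_zero
    · exact h4
  have hker1 : h ≤ LinearMap.ker c₁ := fun x hx => LinearMap.mem_ker.2 (hc₁h x hx)
  have hker2 : h ≤ LinearMap.ker c₂ := fun x hx => LinearMap.mem_ker.2 (hc₂h x hx)
  have part1 : ∀ w ∈ h, c₁ (μ a₁ w) + c₂ (μ a₂ w) = 0 := by
    intro w hw
    set A : Module.End K V := μ.flip w with hA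
    have hApow : A ^ k = 0 := by
      have hrep : ∀ (n : ℕ) (x : V), leftBracket μ x (List.replicate n w) = (A ^ n) x := by
        intro n
        induction n with
        | zero => intro x; simp [leftBracket]
        | succ n ih =>
          intro x
          rw [List.replicate_succ]
          show leftBracket μ (μ x w) (List.replicate n w) = _
          rw [ih (μ x w), pow_succ, Module.End.mul_apply]
          rfl
      ext x
      have := hk x (List.replicate k w) List.length_replicate
      rw [hrep k x] at this
      simpa using this
    have hle : h ≤ h.comap A := fun v hv => Submodule.mem_comap.2 (hsub v hv w hw)
    set Ab : Module.End K (V ⧸ h) := h.mapQ h A hle with hAbdef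
    have hAbapp : ∀ z : V, Ab (Submodule.Quotient.mk z) = Submodule.Quotient.mk (A z) := by
      intro z
      rw [hAbdef, Submodule.mapQ_apply]
    have comm : ∀ (n : ℕ) (x : V),
        (Ab ^ n) (Submodule.Quotient.mk x) = Submodule.Quotient.mk ((A ^ n) x) := by
      intro n
      induction n with
      | zero => intro x; simp
      | succ n ih =>
        intro x
        rw [pow_succ, Module.End.mul_apply, hAbapp x, ih (A x), ← Module.End.mul_apply,
          ← pow_succ]
    have hAbpow : Ab ^ k = 0 := by
      apply Submodule.linearMap_qext
      ext x
      simp only [LinearMap.comp_apply, Submodule.mkQ_apply, LinearMap.zero_comp,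
        LinearMap.zero_apply]
      rw [comm k x, hApow]
      simp
    have htr : LinearMap.trace K (V ⧸ h) Ab = 0 :=
      (LinearMap.isNilpotent_trace_of_isNilpotent ⟨k, hAbpow⟩).eq_zero
    -- basis of quotient
    let eqv : (V ⧸ h) ≃ₗ[K] (Fin 2 → K) :=
      { toFun := fun x => ![h.liftQ c₁ hker1 x, h.liftQ c₂ hker2 x]
        map_add' := by intro x z; funext i; fin_cases i <;> simp
        map_smul' := by intro r x; funext i; fin_cases i <;> simp
        invFun := fun f => h.mkQ (f 0 • a₁ + f 1 • a₂)
        left_inv := by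
          intro x
          obtain ⟨v, rfl⟩ := h.mkQ_surjective x
          simp only [Submodule.mkQ_apply, Submodule.liftQ_apply, Matrix.cons_val_zero,
            Matrix.cons_val_one, Matrix.head_cons]
          rw [Submodule.Quotient.eq]
          have hm := h.neg_mem (hdec v)
          convert hm using 1
          module
        right_inv := by
          intro f
          funext i
          fin_cases i <;>
            simp [map_add, map_smul, h11, h12, h21, h22, smul_eq_mul] }
    let b : Module.Basis (Fin 2) K (V ⧸ h) := Module.Basis.ofEquivFun eqv
    have heqv : ∀ z : V, eqv (Submodule.Quotient.mk z) = ![c₁ z, c₂ z] := fun z => rfl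
    have hb0 : b 0 = Submodule.Quotient.mk a₁ := by
      have hcoe := congrFun (Module.Basis.coe_ofEquivFun eqv) 0
      apply eqv.injective
      rw [show b 0 = eqv.symm (Pi.single 0 1) from hcoe, eqv.apply_symm_apply]
      rw [heqv a₁]
      funext i
      fin_cases i <;> simp [h11, h21]
    have hb1 : b 1 = Submodule.Quotient.mk a₂ := by
      have hcoe := congrFun (Module.Basis.coe_ofEquivFun eqv) 1
      apply eqv.injective
      rw [show b 1 = eqv.symm (Pi.single 1 1) from hcoe, eqv.apply_symm_apply]
      rw [heqv a₂]
      funext i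
      fin_cases i <;> simp [h12, h22]
    have htr2 : LinearMap.trace K (V ⧸ h) Ab
        = c₁ (μ a₁ w) + c₂ (μ a₂ w) := by
      rw [LinearMap.trace_eq_matrix_trace K b Ab, Matrix.trace, Fin.sum_univ_two]
      have d0 : (LinearMap.toMatrix b b Ab).diag 0 = c₁ (μ a₁ w) := by
        show (LinearMap.toMatrix b b Ab) 0 0 = _
        rw [LinearMap.toMatrix_apply, hb0, hAbapp, Module.Basis.ofEquivFun_repr_apply]
        show eqv (Submodule.Quotient.mk (μ a₁ w)) 0 = _
        rw [heqv]
        simp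
      have d1 : (LinearMap.toMatrix b b Ab).diag 1 = c₂ (μ a₂ w) := by
        show (LinearMap.toMatrix b b Ab) 1 1 = _
        rw [LinearMap.toMatrix_apply, hb1, hAbapp, Module.Basis.ofEquivFun_repr_apply]
        show eqv (Submodule.Quotient.mk (μ a₂ w)) 1 = _
        rw [heqv]
        simp
      rw [d0, d1]
    rw [htr2] at htr
    exact htr
  refine ⟨part1, ?_⟩
  intro y hy t
  constructor
  · intro u v
    simp only [wedgeTensor]
    rw [hμa u v]
    module
  · intro u v w
    have myd : ∀ x : V, μ y x = c₁ x • μ y a₁ + c₂ x • μ y a₂ := by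
      intro x
      have hx : x = c₁ x • a₁ + c₂ x • a₂ + (x - c₁ x • a₁ - c₂ x • a₂) := by module
      conv_lhs => rw [hx]
      rw [map_add, map_add, map_smul, map_smul, hy _ (hdec x), add_zero]
    have exp : ∀ p q : V, μ p q
        = (c₁ p * c₂ q - c₂ p * c₁ q) • μ a₁ a₂
          + c₁ p • μ a₁ (q - c₁ q • a₁ - c₂ q • a₂)
          + c₂ p • μ a₂ (q - c₁ q • a₁ - c₂ q • a₂)
          - c₁ q • μ a₁ (p - c₁ p • a₁ - c₂ p • a₂)
          - c₂ q • μ a₂ (p - c₁ p • a₁ - c₂ p • a₂)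
          + μ (p - c₁ p • a₁ - c₂ p • a₂) (q - c₁ q • a₁ - c₂ q • a₂) := by
      intro p q
      have hp : p = c₁ p • a₁ + c₂ p • a₂ + (p - c₁ p • a₁ - c₂ p • a₂) := by module
      have hq : q = c₁ q • a₁ + c₂ q • a₂ + (q - c₁ q • a₁ - c₂ q • a₂) := by module
      conv_lhs => rw [hp, hq]
      simp only [map_add, map_smul, LinearMap.add_apply, LinearMap.smul_apply]
      rw [sq0 a₁, sq0 a₂, hμa a₂ a₁, hμa (p - c₁ p • a₁ - c₂ p • a₂) a₁,
        hμa (p - c₁ p • a₁ - c₂ p • a₂) a₂]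
      module
    have z1 : ∀ p q : V, c₁ (μ (p - c₁ p • a₁ - c₂ p • a₂) (q - c₁ q • a₁ - c₂ q • a₂)) = 0 :=
      fun p q => hc₁h _ (hsub _ (hdec p) _ (hdec q))
    have z2 : ∀ p q : V, c₂ (μ (p - c₁ p • a₁ - c₂ p • a₂) (q - c₁ q • a₁ - c₂ q • a₂)) = 0 :=
      fun p q => hc₂h _ (hsub _ (hdec p) _ (hdec q))
    have e1 : ∀ p q : V, c₁ (μ p q)
        = (c₁ p * c₂ q - c₂ p * c₁ q) * c₁ (μ a₁ a₂)
          + c₁ p * c₁ (μ a₁ (q - c₁ q • a₁ - c₂ q • a₂))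
          + c₂ p * c₁ (μ a₂ (q - c₁ q • a₁ - c₂ q • a₂))
          - c₁ q * c₁ (μ a₁ (p - c₁ p • a₁ - c₂ p • a₂))
          - c₂ q * c₁ (μ a₂ (p - c₁ p • a₁ - c₂ p • a₂)) := by
      intro p q
      have z' := z1 p q
      simp only [map_sub, map_add, map_smul, LinearMap.sub_apply, LinearMap.add_apply,
        LinearMap.smul_apply, smul_eq_mul, sq0, hμa p a₁, hμa p a₂, hμa q a₁, hμa q a₂,
        hμa a₂ a₁, map_neg, map_zero, mul_neg, mul_zero, neg_zero, add_zero, zero_add,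
        sub_zero, neg_neg] at z' ⊢
      linear_combination z'
    have e2 : ∀ p q : V, c₂ (μ p q)
        = (c₁ p * c₂ q - c₂ p * c₁ q) * c₂ (μ a₁ a₂)
          + c₁ p * c₂ (μ a₁ (q - c₁ q • a₁ - c₂ q • a₂))
          + c₂ p * c₂ (μ a₂ (q - c₁ q • a₁ - c₂ q • a₂))
          - c₁ q * c₂ (μ a₁ (p - c₁ p • a₁ - c₂ p • a₂))
          - c₂ q * c₂ (μ a₂ (p - c₁ p • a₁ - c₂ p • a₂)) := by
      intro p q
      have z' := z2 p q
      simp only [map_sub, map_add, map_smul, LinearMap.sub_apply, LinearMap.add_apply,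
        LinearMap.smul_apply, smul_eq_mul, sq0, hμa p a₁, hμa p a₂, hμa q a₁, hμa q a₂,
        hμa a₂ a₁, map_neg, map_zero, mul_neg, mul_zero, neg_zero, add_zero, zero_add,
        sub_zero, neg_neg] at z' ⊢
      linear_combination z'
    have hB : (c₁ (μ u v) * c₂ w - c₂ (μ u v) * c₁ w)
        + (c₁ (μ v w) * c₂ u - c₂ (μ v w) * c₁ u)
        + (c₁ (μ w u) * c₂ v - c₂ (μ w u) * c₁ v) = 0 := by
      rw [e1 u v, e1 v w, e1 w u, e2 u v, e2 v w, e2 w u]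
      linear_combination (c₂ v * c₁ w - c₁ v * c₂ w) * part1 _ (hdec u)
        + (c₂ w * c₁ u - c₁ w * c₂ u) * part1 _ (hdec v)
        + (c₂ u * c₁ v - c₁ u * c₂ v) * part1 _ (hdec w)
    have hBy : ((c₁ (μ u v) * c₂ w - c₂ (μ u v) * c₁ w)
        + (c₁ (μ v w) * c₂ u - c₂ (μ v w) * c₁ u)
        + (c₁ (μ w u) * c₂ v - c₂ (μ w u) * c₁ v)) • y = 0 := by
      rw [hB, zero_smul]
    simp only [wedgeTensor, map_add, map_smul, LinearMap.add_apply, LinearMap.smul_apply,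
      smul_eq_mul]
    rw [myd u, myd v, myd w]
    linear_combination (norm := module) hμj u v w + t • hBy
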